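/- For k ≥ 2, a power series f ∈ Z_{2^k}[[x]] satisfies f^2 = 1 if and only if its constant coefficient squares to 1 and every coefficient in degree ≥ 1 lies in {0, 2^{k-1}}. -/

import Mathlib

lemma pow_sq_zero (k : ℕ) (hk : 2 ≤ k) :
    (2^(k-1) : ZMod (2^k)) * 2^(k-1) = 0 := by
  have h : ((2^k : ℕ) : ZMod (2^k)) = 0 := ZMod.natCast_self _
  push_cast at h
  calc (2^(k-1) : ZMod (2^k)) * 2^(k-1) = 2^k * 2^(k-2) := by
        rw [← pow_add, ← pow_add]; congr 1; omega
    _ = 0 := by rw [h, zero_mul]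

lemma two_mul_pow_zero (k : ℕ) (hk : 2 ≤ k) :
    (2 : ZMod (2^k)) * 2^(k-1) = 0 := by
  have h : ((2^k : ℕ) : ZMod (2^k)) = 0 := ZMod.natCast_self _
  push_cast at h
  calc (2 : ZMod (2^k)) * 2^(k-1) = 2^k := by rw [← pow_succ']; congr 1; omega
    _ = 0 := h

lemma two_torsion (k : ℕ) (hk : 2 ≤ k) (x : ZMod (2^k)) :
    2 * x = 0 ↔ x = 0 ∨ x = 2^(k-1) := by
  haveI : NeZero (2^k) := ⟨by positivity⟩
  constructor
  · intro hx
    have hx' : ((2 * x.val : ℕ) : ZMod (2^k)) = 0 := by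
      push_cast
      rw [ZMod.natCast_val, ZMod.cast_id]
      exact hx
    have hdvd : 2^k ∣ 2 * x.val := (ZMod.natCast_eq_zero_iff _ _).mp hx'
    have hdvd2 : 2^(k-1) ∣ x.val := by
      obtain ⟨c, hc⟩ := hdvd
      refine ⟨c, ?_⟩
      have hk2 : (2:ℕ)^k = 2 * 2^(k-1) := by
        rw [← pow_succ']; congr 1; omega
      have hc' : 2 * x.val = 2 * (2^(k-1) * c) := by rw [hc, hk2]; ring
      omega
    have hlt : x.val < 2^k := ZMod.val_lt x
    obtain ⟨m, hm⟩ := hdvd2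
    have hk2 : 2^k = 2^(k-1) * 2 := by rw [← pow_succ]; congr 1; omega
    have hmlt : m < 2 := by
      by_contra h
      push_neg at h
      have := Nat.mul_le_mul_left (2^(k-1)) h
      omega
    have hxv : x = ((x.val : ℕ) : ZMod (2^k)) := by
      rw [ZMod.natCast_val, ZMod.cast_id]
    interval_cases m
    · left; rw [hxv, hm]; simp
    · right; rw [hxv, hm]; push_cast; ring
  · rintro (rfl | rfl)
    · ring
    · exact two_mul_pow_zero k hk

theorem powerseries_zmod_two_pow_involutions (k : ℕ) (hk : 2 ≤ k)
    (f : PowerSeries (ZMod (2^k))) :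
    f^2 = 1 ↔ (PowerSeries.coeff 0 f)^2 = 1 ∧
      ∀ i, 1 ≤ i → PowerSeries.coeff i f = 0 ∨ PowerSeries.coeff i f = 2^(k-1) := by
  haveI : NeZero (2^k) := ⟨by positivity⟩
  set a : ℕ → ZMod (2^k) := fun i => PowerSeries.coeff i f with ha
  have hdecomp : ∀ n, 1 ≤ n →
      (PowerSeries.coeff n (f * f)) =
        a 0 * a n + a n * a 0 + ∑ j ∈ Finset.Ioo 0 n, a j * a (n - j) := by
    intro n hn
    rw [PowerSeries.coeff_mul, Finset.Nat.sum_antidiagonal_eq_sum_range_succ_mk]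
    have hset : Finset.range (n+1) = insert 0 (insert n (Finset.Ioo 0 n)) := by
      ext j; simp [Finset.mem_Ioo, Finset.mem_range]; omega
    rw [hset, Finset.sum_insert, Finset.sum_insert]
    · simp only [Nat.sub_zero, Nat.sub_self]
      ring
    · simp [Finset.mem_Ioo]
    · simp [Finset.mem_Ioo]; omega
  have hmid : ∀ n, (∀ j, 1 ≤ j → j < n → a j = 0 ∨ a j = 2^(k-1)) →
      ∑ j ∈ Finset.Ioo 0 n, a j * a (n - j) = 0 := by
    intro n hIH
    apply Finset.sum_eq_zero
    intro j hj
    simp only [Finset.mem_Ioo] at hj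
    rcases hIH j hj.1 hj.2 with h1 | h1 <;>
      rcases hIH (n - j) (by omega) (by omega) with h2 | h2 <;>
      rw [h1, h2] <;> simp [pow_sq_zero k hk]
  constructor
  · intro hf
    have key : ∀ n, (PowerSeries.coeff n (f * f)) = PowerSeries.coeff n (1 : PowerSeries (ZMod (2^k))) := by
      intro n; rw [← sq, hf]
    have h0 : a 0 ^ 2 = 1 := by
      simpa [ha, PowerSeries.coeff_mul, sq] using key 0
    refine ⟨h0, ?_⟩
    intro i hi
    induction i using Nat.strong_induction_on with
    | _ n ih =>
      have hn := key n
      rw [hdecomp n hi, hmid n (fun j hj1 hj2 => ih j hj2 hj1),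
        PowerSeries.coeff_one, if_neg (by omega)] at hn
      have h2an : 2 * a n = 0 := by
        have : a 0 * (a 0 * a n + a n * a 0 + 0) = a 0 * 0 := by rw [hn]
        calc 2 * a n = a 0 * (a 0 * a n + a n * a 0 + 0) := by
              rw [mul_add, mul_add, ← mul_assoc, ← sq]
              rw [show a 0 * (a n * a 0) = a 0 ^ 2 * a n by ring, h0]
              ring
          _ = 0 := by rw [hn, mul_zero]
      exact (two_torsion k hk (a n)).mp h2an
  · rintro ⟨h0, h1⟩
    ext n
    rw [sq]
    rcases Nat.eq_zero_or_pos n with rfl | hn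
    · simpa [PowerSeries.coeff_mul, sq] using h0
    · rw [hdecomp n hn, hmid n (fun j hj1 _ => h1 j hj1),
        PowerSeries.coeff_one, if_neg (by omega), add_zero]
      have h2an : 2 * a n = 0 := by
        show 2 * PowerSeries.coeff n f = 0
        rcases h1 n hn with h | h <;> rw [h]
        · ring
        · exact two_mul_pow_zero k hk
      calc a 0 * a n + a n * a 0 = a 0 * (2 * a n) := by ring
        _ = 0 := by rw [h2an, mul_zero]
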